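/- As α = (α_1,...,α_d) → 0 in (0,∞)^d, one has Γ(α_1)⋯Γ(α_d)/Γ(α_1 + ⋯ + α_d) ~ ∑_{i=1}^d 1/∏_{j≠i} α_j; in particular, G(α) := ∑_i log Γ(α_i) - log Γ(∑_i α_i) tends to +∞ as α → 0. -/

import Mathlib

open Finset Filter

/-- As `α → 0` in the positive orthant,
`Γ(α₁)⋯Γ(α_d)/Γ(α₁+⋯+α_d) ~ ∑ᵢ 1/∏_{j≠i} αⱼ`, and consequently
`G(α) = ∑ᵢ log Γ(αᵢ) - log Γ(∑ᵢ αᵢ)` tends to `+∞`. -/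
theorem gamma_ratio_asymptotics (d : ℕ) (hd : 2 ≤ d) :
    Asymptotics.IsEquivalent
        (nhdsWithin (0 : Fin d → ℝ) {α | ∀ i, 0 < α i})
        (fun α : Fin d → ℝ => (∏ i, Real.Gamma (α i)) / Real.Gamma (∑ i, α i))
        (fun α : Fin d → ℝ => ∑ i, 1 / ∏ j ∈ Finset.univ.erase i, α j) ∧
    Tendsto
        (fun α : Fin d → ℝ =>
          ∑ i, Real.log (Real.Gamma (α i)) - Real.log (Real.Gamma (∑ i, α i)))
        (nhdsWithin (0 : Fin d → ℝ) {α | ∀ i, 0 < α i}) atTop := by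
  have hd1 : 0 < d := by omega
  set s : Set (Fin d → ℝ) := {α | ∀ i, 0 < α i} with hs
  set l : Filter (Fin d → ℝ) := nhdsWithin 0 s with hl
  set f : (Fin d → ℝ) → ℝ := fun α => (∏ i, Real.Gamma (α i)) / Real.Gamma (∑ i, α i) with hf
  set g : (Fin d → ℝ) → ℝ := fun α => ∑ i, 1 / ∏ j ∈ Finset.univ.erase i, α j with hg
  have hpos : ∀ᶠ α in l, ∀ i, 0 < α i := eventually_mem_nhdsWithin
  -- each coordinate tends to 0 within (0,∞)
  have hcoord : ∀ i : Fin d, Tendsto (fun α : Fin d → ℝ => α i) l (nhdsWithin 0 (Set.Ioi 0)) := by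
    intro i
    rw [tendsto_nhdsWithin_iff]
    constructor
    · exact (((continuous_apply i).tendsto 0).mono_left nhdsWithin_le_nhds)
    · exact hpos.mono fun α h => h i
  -- the sum tends to 0 within (0,∞)
  have hsum : Tendsto (fun α : Fin d → ℝ => ∑ i, α i) l (nhdsWithin 0 (Set.Ioi 0)) := by
    rw [tendsto_nhdsWithin_iff]
    constructor
    · have : Tendsto (fun α : Fin d → ℝ => ∑ i, α i) l (nhds (∑ i : Fin d, (0:ℝ))) :=
        tendsto_finset_sum _ fun i _ => (hcoord i).mono_right nhdsWithin_le_nhds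
      simpa using this
    · exact hpos.mono fun α h => Finset.sum_pos (fun i _ => h i)
        (Finset.univ_nonempty_iff.mpr ⟨⟨0, hd1⟩⟩)
  have hGamma1 : ContinuousAt Real.Gamma 1 := by
    refine (Real.differentiableAt_Gamma ?_).continuousAt
    intro m hc
    have : (0:ℝ) ≤ (m:ℝ) := Nat.cast_nonneg m
    linarith
  -- ratio function
  have hratio : Tendsto (fun α : Fin d → ℝ =>
      (∏ i, Real.Gamma (α i + 1)) / Real.Gamma ((∑ i, α i) + 1)) l (nhds 1) := by
    have h1 : ∀ i : Fin d, Tendsto (fun α : Fin d → ℝ => Real.Gamma (α i + 1)) l (nhds 1) := by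
      intro i
      have : Tendsto (fun α : Fin d → ℝ => α i + 1) l (nhds 1) := by
        have := Tendsto.add_const 1 ((hcoord i).mono_right nhdsWithin_le_nhds)
        simpa using this
      simpa [Real.Gamma_one, Function.comp_def] using hGamma1.tendsto.comp this
    have hnum : Tendsto (fun α : Fin d → ℝ => ∏ i, Real.Gamma (α i + 1)) l (nhds 1) := by
      have := tendsto_finset_prod (Finset.univ : Finset (Fin d))
        (fun i _ => h1 i) (f := fun i (α : Fin d → ℝ) => Real.Gamma (α i + 1))
      simpa using this
    have hden : Tendsto (fun α : Fin d → ℝ => Real.Gamma ((∑ i, α i) + 1)) l (nhds 1) := by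
      have hsum1 : Tendsto (fun α : Fin d → ℝ => (∑ i, α i) + 1) l (nhds 1) := by
        have := Tendsto.add_const 1 (hsum.mono_right nhdsWithin_le_nhds)
        simpa using this
      simpa [Real.Gamma_one, Function.comp_def] using hGamma1.tendsto.comp hsum1
    simpa [Pi.div_def] using hnum.div hden one_ne_zero
  -- eventually f/g equals the ratio
  have hfg : ∀ᶠ α in l, f α / g α =
      (∏ i, Real.Gamma (α i + 1)) / Real.Gamma ((∑ i, α i) + 1) := by
    filter_upwards [hpos] with α hα
    have hP : (0:ℝ) < ∏ j, α j := Finset.prod_pos fun j _ => hα j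
    have hS : (0:ℝ) < ∑ i, α i := Finset.sum_pos (fun i _ => hα i)
      (Finset.univ_nonempty_iff.mpr ⟨⟨0, hd1⟩⟩)
    have hGS : (0:ℝ) < Real.Gamma (∑ i, α i) := Real.Gamma_pos_of_pos hS
    have hgα : g α = (∑ i, α i) / ∏ j, α j := by
      simp only [hg]
      rw [Finset.sum_div]
      refine Finset.sum_congr rfl fun i _ => ?_
      have hPi : (0:ℝ) < ∏ j ∈ Finset.univ.erase i, α j :=
        Finset.prod_pos fun j _ => hα j
      rw [← Finset.mul_prod_erase Finset.univ α (Finset.mem_univ i)]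
      rw [eq_div_iff (mul_pos (hα i) hPi).ne']
      field_simp
    have hnum : ∏ i, Real.Gamma (α i + 1) = (∏ i, α i) * ∏ i, Real.Gamma (α i) := by
      rw [← Finset.prod_mul_distrib]
      exact Finset.prod_congr rfl fun i _ => Real.Gamma_add_one (hα i).ne'
    have hden : Real.Gamma ((∑ i, α i) + 1) = (∑ i, α i) * Real.Gamma (∑ i, α i) :=
      Real.Gamma_add_one hS.ne'
    rw [hgα, hnum, hden, hf]
    field_simp
  -- g is eventually positive
  have hgpos : ∀ᶠ α in l, 0 < g α := by
    filter_upwards [hpos] with α hα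
    exact Finset.sum_pos
      (fun i _ => one_div_pos.mpr (Finset.prod_pos fun j _ => hα j))
      (Finset.univ_nonempty_iff.mpr ⟨⟨0, hd1⟩⟩)
  have hequiv : Asymptotics.IsEquivalent l f g := by
    rw [Asymptotics.isEquivalent_iff_tendsto_one (hgpos.mono fun α h => h.ne')]
    exact Tendsto.congr' (hfg.mono fun α h => h.symm) hratio
  refine ⟨hequiv, ?_⟩
  -- g tends to atTop
  have hgtop : Tendsto g l atTop := by
    set i0 : Fin d := ⟨0, hd1⟩ with hi0
    have h0 : (∏ _j ∈ Finset.univ.erase i0, (0:ℝ)) = 0 := by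
      rw [Finset.prod_const, Finset.card_erase_of_mem (Finset.mem_univ _),
        Finset.card_univ, Fintype.card_fin]
      exact zero_pow (by omega)
    have hprod0 : Tendsto (fun α : Fin d → ℝ => ∏ j ∈ Finset.univ.erase i0, α j) l
        (nhdsWithin 0 (Set.Ioi 0)) := by
      rw [tendsto_nhdsWithin_iff]
      constructor
      · rw [← h0]
        exact tendsto_finset_prod (Finset.univ.erase i0)
          (fun j _ => ((hcoord j).mono_right nhdsWithin_le_nhds))
      · exact hpos.mono fun α h => Finset.prod_pos fun j _ => h j
    have hterm : Tendsto (fun α : Fin d → ℝ => 1 / ∏ j ∈ Finset.univ.erase i0, α j) l atTop := by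
      simpa [one_div, Function.comp_def] using tendsto_inv_nhdsGT_zero.comp hprod0
    apply tendsto_atTop_mono' l ?_ hterm
    filter_upwards [hpos] with α hα
    exact Finset.single_le_sum (f := fun i => 1 / ∏ j ∈ Finset.univ.erase i, α j)
      (fun i _ => div_nonneg zero_le_one (Finset.prod_pos fun j _ => hα j).le)
      (Finset.mem_univ i0)
  -- f tends to atTop
  have hftop : Tendsto f l atTop := by
    have : Tendsto (fun α => (f α / g α) * g α) l atTop :=
      Tendsto.pos_mul_atTop one_pos (Tendsto.congr' (hfg.mono fun α h => h.symm) hratio) hgtop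
    apply Tendsto.congr' ?_ this
    filter_upwards [hgpos] with α h
    exact div_mul_cancel₀ _ h.ne'
  -- G = log f eventually
  have hGlog : ∀ᶠ α in l, (∑ i, Real.log (Real.Gamma (α i)) - Real.log (Real.Gamma (∑ i, α i)))
      = Real.log (f α) := by
    filter_upwards [hpos] with α hα
    have h1 : ∀ i : Fin d, (0:ℝ) < Real.Gamma (α i) := fun i => Real.Gamma_pos_of_pos (hα i)
    have hS : (0:ℝ) < ∑ i, α i := Finset.sum_pos (fun i _ => hα i)
      (Finset.univ_nonempty_iff.mpr ⟨⟨0, hd1⟩⟩)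
    have h2 : (0:ℝ) < Real.Gamma (∑ i, α i) := Real.Gamma_pos_of_pos hS
    rw [hf, Real.log_div (Finset.prod_pos fun i _ => h1 i).ne' h2.ne',
      Real.log_prod fun i _ => (h1 i).ne']
  exact Tendsto.congr' (hGlog.mono fun α h => h.symm) (Real.tendsto_log_atTop.comp hftop)
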